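/- The ring O(ℂ) of entire holomorphic functions on the complex plane has Bass stable rank equal to 1; i.e., for any f, g ∈ O(ℂ) with no common zeros (equivalently, (f,g) unimodular by the corona theorem for O(ℂ)), there exists c ∈ O(ℂ) such that f + cg has no zeros (is invertible in O(ℂ)). -/

import Mathlib

open scoped BigOperators

open Complex Metric Filter Set Topology


/-- The entire function `(exp t - 1)/t`. -/
noncomputable def Eaux : ℂ → ℂ := fun t => ∑' n : ℕ, ((n + 1).factorial : ℂ)⁻¹ * t ^ n

lemma Eaux_summable (t : ℂ) : Summable (fun n : ℕ => ((n + 1).factorial : ℂ)⁻¹ * t ^ n) := by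
  apply Summable.of_norm_bounded (g := fun n : ℕ => ‖t‖ ^ n / n.factorial)
    (Real.summable_pow_div_factorial ‖t‖)
  intro n
  rw [norm_mul, norm_pow, norm_inv]
  rw [div_eq_inv_mul]
  apply mul_le_mul_of_nonneg_right _ (by positivity)
  rw [inv_le_inv₀ (by rw [Complex.norm_natCast]; exact_mod_cast Nat.factorial_pos _) (by positivity)]
  simp only [Complex.norm_natCast]
  exact_mod_cast Nat.factorial_le (Nat.le_succ n)

lemma Eaux_differentiable : Differentiable ℂ Eaux := by
  intro z
  have hz : z ∈ ball (0 : ℂ) (‖z‖ + 1) := by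
    simp only [mem_ball, dist_zero_right]
    linarith
  have : DifferentiableOn ℂ Eaux (ball (0 : ℂ) (‖z‖ + 1)) := by
    apply differentiableOn_tsum_of_summable_norm
      (u := fun n : ℕ => (‖z‖ + 1) ^ n / n.factorial)
      (Real.summable_pow_div_factorial _)
    · intro i
      apply DifferentiableOn.const_mul
      exact (differentiable_pow i).differentiableOn
    · exact isOpen_ball
    · intro i w hw
      rw [norm_mul, norm_pow, norm_inv, div_eq_inv_mul]
      have hw' : ‖w‖ ≤ ‖z‖ + 1 := le_of_lt (by simpa [mem_ball, dist_zero_right] using hw)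
      have h1 : ‖(((i + 1).factorial : ℂ))‖⁻¹ ≤ ((i.factorial : ℝ))⁻¹ := by
        rw [inv_le_inv₀ (by rw [Complex.norm_natCast]; exact_mod_cast Nat.factorial_pos _) (by positivity)]
        simp only [Complex.norm_natCast]
        exact_mod_cast Nat.factorial_le (Nat.le_succ i)
      calc ‖(((i + 1).factorial : ℂ))‖⁻¹ * ‖w‖ ^ i
          ≤ ((i.factorial : ℝ))⁻¹ * (‖z‖ + 1) ^ i := by
            apply mul_le_mul h1 (pow_le_pow_left₀ (norm_nonneg w) hw' i) (by positivity) (by positivity)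
        _ = _ := by ring
  exact (this.differentiableAt (isOpen_ball.mem_nhds hz))

lemma exp_eq_one_add_mul_Eaux (t : ℂ) : Complex.exp t = 1 + t * Eaux t := by
  have hexp : Complex.exp t = ∑' n : ℕ, ((n.factorial : ℂ))⁻¹ * t ^ n := by
    rw [Complex.exp_eq_exp_ℂ, NormedSpace.exp_eq_tsum ℂ]
    simp [smul_eq_mul]
  have hsum : Summable (fun n : ℕ => ((n.factorial : ℂ))⁻¹ * t ^ n) := by
    apply Summable.of_norm_bounded (g := fun n : ℕ => ‖t‖ ^ n / n.factorial)
      (Real.summable_pow_div_factorial ‖t‖)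
    intro n
    rw [norm_mul, norm_pow, norm_inv, div_eq_inv_mul]
    simp [Complex.norm_natCast]
  rw [hexp, Summable.tsum_eq_zero_add hsum]
  simp only [Nat.factorial_zero, Nat.cast_one, inv_one, pow_zero, mul_one]
  congr 1
  rw [Eaux, ← tsum_mul_left]
  apply tsum_congr
  intro n
  ring

/-- Decompose an analytic function as value plus `(z-a)` times analytic. -/
lemma analytic_sub_factor {B : ℂ → ℂ} {a : ℂ} (hB : AnalyticAt ℂ B a) :
    ∃ B' : ℂ → ℂ, AnalyticAt ℂ B' a ∧ ∀ z, B z = B a + (z - a) * B' z := by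
  refine ⟨dslope B a, ?_, ?_⟩
  · obtain ⟨p, hp⟩ := hB
    exact (hp.has_fpower_series_dslope_fslope).analyticAt
  · intro z
    have := sub_smul_dslope B a z
    rw [smul_eq_mul] at this
    linear_combination -this


section part2
/-- Taylor decomposition: an analytic function is a polynomial plus `(z-a)^m` times analytic. -/
lemma taylor_decomp (m : ℕ) : ∀ {w : ℂ → ℂ} {a : ℂ}, AnalyticAt ℂ w a →
    ∃ T B : ℂ → ℂ, Differentiable ℂ T ∧ AnalyticAt ℂ B a ∧
      ∀ z, w z = T z + (z - a) ^ m * B z := by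
  induction m with
  | zero =>
    intro w a hw
    exact ⟨0, w, differentiable_const 0, hw, fun z => by simp⟩
  | succ m ih =>
    intro w a hw
    obtain ⟨T, B, hT, hB, hdec⟩ := ih hw
    obtain ⟨B', hB', hBdec⟩ := by
      refine (?_ : ∃ B' : ℂ → ℂ, AnalyticAt ℂ B' a ∧ ∀ z, B z = B a + (z - a) * B' z)
      refine ⟨dslope B a, ?_, ?_⟩
      · obtain ⟨p, hp⟩ := hB
        exact (hp.has_fpower_series_dslope_fslope).analyticAt
      · intro z
        have := sub_smul_dslope B a z
        rw [smul_eq_mul] at this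
        linear_combination -this
    refine ⟨fun z => T z + (z - a) ^ m * B a, B', ?_, hB', ?_⟩
    · apply hT.add
      apply Differentiable.mul _ (differentiable_const _)
      exact Differentiable.pow (by simpa using (differentiable_id.sub (differentiable_const a))) m
    · intro z
      rw [hdec z, hBdec z]
      ring

/-- Factorization of an entire `g ≢ 0` at a zero. -/
lemma zero_factor {g : ℂ → ℂ} (hg : Differentiable ℂ g) (hgne : ∃ z, g z ≠ 0) {a : ℂ}
    (ha : g a = 0) :
    ∃ (m : ℕ) (u : ℂ → ℂ), 1 ≤ m ∧ AnalyticAt ℂ u a ∧ u a ≠ 0 ∧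
      ∀ᶠ z in nhds a, g z = (z - a) ^ m * u z := by
  have hga : AnalyticAt ℂ g a := hg.analyticAt a
  have hord : analyticOrderAt g a ≠ ⊤ := by
    intro htop
    rw [analyticOrderAt_eq_top] at htop
    have : EqOn g 0 univ := AnalyticOnNhd.eqOn_zero_of_preconnected_of_eventuallyEq_zero
      (fun z _ => hg.analyticAt z) isPreconnected_univ (mem_univ a) htop
    obtain ⟨z, hz⟩ := hgne
    exact hz (this (mem_univ z))
  lift analyticOrderAt g a to ℕ using hord with m hm
  rw [eq_comm, hga.analyticOrderAt_eq_natCast] at hm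
  obtain ⟨u, hu, hua, hev⟩ := hm
  have hev' : ∀ᶠ z in nhds a, g z = (z - a) ^ m * u z := by
    filter_upwards [hev] with z hz using by simpa [smul_eq_mul] using hz
  refine ⟨m, u, ?_, hu, hua, hev'⟩
  by_contra hm1
  have hm0 : m = 0 := by omega
  have := hev'.self_of_nhds
  rw [hm0] at this
  simp at this
  exact hua (by rw [← this]; exact ha)

/-- Local logarithm of a nonvanishing holomorphic function. -/
lemma local_log {f : ℂ → ℂ} (hf : Differentiable ℂ f) {a : ℂ} (ha : f a ≠ 0) :
    ∃ L : ℂ → ℂ, AnalyticAt ℂ L a ∧ L a = Complex.log (f a) ∧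
      ∀ᶠ z in nhds a, Complex.exp (L z) = f z := by
  refine ⟨fun z => Complex.log (f a) + Complex.log (f z / f a), ?_, ?_, ?_⟩
  · apply analyticAt_const.add
    apply AnalyticAt.clog ((hf.analyticAt a).div analyticAt_const ha)
    simp only [Pi.div_apply, div_self ha]
    exact Complex.one_mem_slitPlane
  · simp [div_self ha, Complex.log_one]
  · have hne : ∀ᶠ z in nhds a, f z ≠ 0 := (hf.continuous.continuousAt).eventually_ne ha
    filter_upwards [hne] with z hz
    rw [Complex.exp_add, Complex.exp_log ha, Complex.exp_log (div_ne_zero hz ha)]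
    field_simp
end part2


/-- Polynomial approximation of a function holomorphic off one point `b`,
on the ball of radius `‖b‖/2`. -/
lemma rational_approx {b : ℂ} {rb : ℂ → ℂ} (hrb : DifferentiableOn ℂ rb {b}ᶜ)
    (hb : 0 < ‖b‖) {ε : ℝ} (hε : 0 < ε) :
    ∃ p : ℂ → ℂ, Differentiable ℂ p ∧ ∀ z ∈ ball (0:ℂ) (‖b‖/2), ‖rb z - p z‖ ≤ ε := by
  set R : NNReal := (3 * ‖b‖ / 4).toNNReal with hR
  have hRcoe : (R : ℝ) = 3 * ‖b‖ / 4 := Real.coe_toNNReal _ (by positivity)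
  have hRpos : 0 < R := by
    rw [← NNReal.coe_pos, hRcoe]; linarith
  have hsub : closedBall (0:ℂ) R ⊆ {b}ᶜ := by
    intro z hz
    simp only [mem_closedBall, dist_zero_right, hRcoe] at hz
    simp only [mem_compl_iff, mem_singleton_iff]
    rintro rfl
    linarith
  have hps := (hrb.mono hsub).hasFPowerSeriesOnBall hRpos
  set r' : NNReal := (‖b‖ / 2).toNNReal with hr'
  have hr'coe : (r' : ℝ) = ‖b‖ / 2 := Real.coe_toNNReal _ (by positivity)
  have hlt : (r' : ENNReal) < (R : ENNReal) := by
    rw [ENNReal.coe_lt_coe, ← NNReal.coe_lt_coe, hr'coe, hRcoe]; linarith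
  have htu := hps.tendstoUniformlyOn hlt
  rw [Metric.tendstoUniformlyOn_iff] at htu
  obtain ⟨n, hn⟩ := (htu ε hε).exists
  refine ⟨fun y => (cauchyPowerSeries rb 0 R).partialSum n y, ?_, ?_⟩
  · have heq : (fun y => (cauchyPowerSeries rb 0 (R:ℝ)).partialSum n y)
        = fun y => ∑ k ∈ Finset.range n, y ^ k * (cauchyPowerSeries rb 0 (R:ℝ)).coeff k := by
      funext y
      rw [FormalMultilinearSeries.partialSum]
      refine Finset.sum_congr rfl fun k _ => ?_
      rw [FormalMultilinearSeries.apply_eq_pow_smul_coeff, smul_eq_mul]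
    rw [heq]
    apply Differentiable.fun_sum
    intro k _
    exact (differentiable_pow k).mul (differentiable_const _)
  · intro z hz
    have hz' : z ∈ ball (0:ℂ) (r' : ℝ) := by rw [hr'coe]; exact hz
    have h2 := hn z hz'
    rw [zero_add, dist_eq_norm] at h2
    exact le_of_lt h2

/-- Mittag-Leffler-type construction: given a set `S` which is finite in every
ball, and "principal parts" `r a` holomorphic off `a`, there is a function `M`,
holomorphic off `S`, such that near each `a ∈ S`, `M - r a` is holomorphic. -/
lemma mittag_leffler (S : Set ℂ) (hfin : ∀ R : ℝ, (S ∩ closedBall 0 R).Finite)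
    (r : ℂ → ℂ → ℂ) (hr : ∀ a ∈ S, DifferentiableOn ℂ (r a) {a}ᶜ) :
    ∃ M : ℂ → ℂ, (∀ z ∉ S, AnalyticAt ℂ M z) ∧
      ∀ a ∈ S, ∃ N : ℂ → ℂ, AnalyticAt ℂ N a ∧ ∀ z, z ≠ a → M z = r a z + N z := by
  classical
  by_cases hSfin : S.Finite
  · refine ⟨fun z => ∑ b ∈ hSfin.toFinset, r b z, ?_, ?_⟩
    · intro z hz
      apply Finset.analyticAt_fun_sum
      intro b hb
      have hbS : b ∈ S := hSfin.mem_toFinset.mp hb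
      have hzb : z ∈ ({b}ᶜ : Set ℂ) := by
        simp only [mem_compl_iff, mem_singleton_iff]
        rintro rfl; exact hz hbS
      exact (hr b hbS).analyticAt (isOpen_compl_singleton.mem_nhds hzb)
    · intro a ha
      refine ⟨fun z => ∑ b ∈ hSfin.toFinset.erase a, r b z, ?_, ?_⟩
      · apply Finset.analyticAt_fun_sum
        intro b hb
        have hba : b ≠ a := (Finset.mem_erase.mp hb).1
        have hbS : b ∈ S := hSfin.mem_toFinset.mp (Finset.mem_erase.mp hb).2
        have hzb : a ∈ ({b}ᶜ : Set ℂ) := by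
          simp only [mem_compl_iff, mem_singleton_iff]
          intro hab; exact hba hab.symm
        exact (hr b hbS).analyticAt (isOpen_compl_singleton.mem_nhds hzb)
      · intro z _
        exact (Finset.add_sum_erase _ (fun b => r b z) (hSfin.mem_toFinset.mpr ha)).symm
  · -- infinite case
    have hScount : S.Countable := by
      have hsub : S ⊆ ⋃ n : ℕ, S ∩ closedBall 0 n := by
        intro z hz
        obtain ⟨n, hn⟩ := exists_nat_ge ‖z‖
        exact mem_iUnion.mpr ⟨n, hz, by simpa [mem_closedBall, dist_zero_right] using hn⟩
      exact (Set.countable_iUnion (fun n : ℕ => (hfin n).countable)).mono hsub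
    haveI : Countable S := hScount.to_subtype
    haveI : Infinite S := Set.infinite_coe_iff.mpr hSfin
    haveI : Encodable S := Encodable.ofCountable _
    haveI : Denumerable S := Denumerable.ofEncodableOfInfinite _
    set e := Denumerable.eqv S with he
    set a : ℕ → ℂ := fun n => (e.symm n : ℂ) with ha_def
    have hainj : Function.Injective a := by
      intro m n h
      exact e.symm.injective (Subtype.coe_injective h)
    have haS : ∀ n, a n ∈ S := fun n => (e.symm n).2
    have hfinidx : ∀ R : ℝ, {n : ℕ | ‖a n‖ ≤ R}.Finite := by
      intro R
      have hpre : {n : ℕ | ‖a n‖ ≤ R} = a ⁻¹' (S ∩ closedBall 0 R) := by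
        ext n
        simp [haS n, mem_closedBall, dist_zero_right]
      rw [hpre]
      exact Set.Finite.preimage (hainj.injOn) (hfin R)
    have hchoice : ∀ n : ℕ, ∃ p : ℂ → ℂ, Differentiable ℂ p ∧
        (0 < ‖a n‖ → ∀ z ∈ ball (0:ℂ) (‖a n‖/2), ‖r (a n) z - p z‖ ≤ (1/2:ℝ)^n) := by
      intro n
      by_cases hpos : 0 < ‖a n‖
      · obtain ⟨p, hp1, hp2⟩ := rational_approx (hr (a n) (haS n)) hpos
          (show (0:ℝ) < (1/2:ℝ)^n by positivity)
        exact ⟨p, hp1, fun _ => hp2⟩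
      · exact ⟨0, differentiable_const 0, fun h => absurd h hpos⟩
    choose p hp1 hp2 using hchoice
    set d : ℕ → ℂ → ℂ := fun n z => r (a n) z - p n z with hd_def
    have hB : ∀ (n : ℕ) (z : ℂ), 2 * ‖z‖ < ‖a n‖ → ‖d n z‖ ≤ (1/2:ℝ)^n := by
      intro n z hz
      have hpos : 0 < ‖a n‖ := lt_of_le_of_lt (by positivity) hz
      apply hp2 n hpos z
      simp only [mem_ball, dist_zero_right]
      linarith
    have hgeom : Summable (fun n : ℕ => (1/2:ℝ)^n) :=
      summable_geometric_of_lt_one (by norm_num) (by norm_num)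
    have hsummable : ∀ z : ℂ, Summable (fun n => d n z) := by
      intro z
      apply Summable.of_norm_bounded_eventually (g := fun n => (1/2:ℝ)^n) hgeom
      have hss : {n : ℕ | ¬ ‖d n z‖ ≤ (1/2:ℝ)^n} ⊆ {n : ℕ | ‖a n‖ ≤ 2 * ‖z‖} := by
        intro n hn
        by_contra h2
        exact hn (hB n z (lt_of_not_ge h2))
      exact Filter.eventually_cofinite.mpr ((hfinidx (2*‖z‖)).subset hss)
    set M : ℂ → ℂ := fun z => ∑' n, d n z with hM_def
    have htail : ∀ R : ℝ, 0 < R → DifferentiableOn ℂ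
        (fun z => ∑' i : ↑((↑(hfinidx (2*R)).toFinset : Set ℕ)ᶜ), d (↑i) z) (ball (0:ℂ) R) := by
      intro R hR
      apply differentiableOn_tsum_of_summable_norm
        (u := fun i : ↑((↑(hfinidx (2*R)).toFinset : Set ℕ)ᶜ) => (1/2:ℝ)^(i:ℕ))
      · exact hgeom.subtype _
      · intro i
        have hi : ¬ ‖a ↑i‖ ≤ 2*R := by
          have := i.2
          simp only [mem_compl_iff, Finset.coe_sort_coe, Set.Finite.coe_toFinset,
            mem_setOf_eq] at this ⊢
          exact this
        apply DifferentiableOn.sub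
        · apply (hr (a ↑i) (haS _)).mono
          intro z hz
          simp only [mem_ball, dist_zero_right] at hz
          simp only [mem_compl_iff, mem_singleton_iff]
          rintro rfl
          push_neg at hi
          nlinarith [norm_nonneg (a ↑i)]
        · exact (hp1 _).differentiableOn
      · exact isOpen_ball
      · intro i w hw
        apply hB
        simp only [mem_ball, dist_zero_right] at hw
        push_neg at *
        have hi : 2*R < ‖a ↑i‖ := by
          have := i.2
          simp only [mem_compl_iff, Finset.coe_sort_coe, Set.Finite.coe_toFinset,
            mem_setOf_eq] at this
          exact lt_of_not_ge this
        linarith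
    have hsplit : ∀ (R : ℝ) (z : ℂ), M z = (∑ i ∈ (hfinidx (2*R)).toFinset, d i z)
        + ∑' i : ↑((↑(hfinidx (2*R)).toFinset : Set ℕ)ᶜ), d (↑i) z :=
      fun R z => (Summable.sum_add_tsum_compl (hsummable z)).symm
    refine ⟨M, ?_, ?_⟩
    · intro z₀ hz₀
      set R : ℝ := ‖z₀‖ + 1 with hRdef
      have hMeq : M = fun z => (∑ i ∈ (hfinidx (2*R)).toFinset, d i z)
          + ∑' i : ↑((↑(hfinidx (2*R)).toFinset : Set ℕ)ᶜ), d (↑i) z := funext (hsplit R)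
      rw [hMeq]
      apply AnalyticAt.add
      · apply Finset.analyticAt_fun_sum
        intro i _
        apply AnalyticAt.sub
        · have hzb : z₀ ∈ ({a i}ᶜ : Set ℂ) := by
            simp only [mem_compl_iff, mem_singleton_iff]
            rintro rfl; exact hz₀ (haS i)
          exact (hr _ (haS i)).analyticAt (isOpen_compl_singleton.mem_nhds hzb)
        · exact (hp1 i).analyticAt z₀
      · apply ((htail R (by positivity)).analyticAt)
        apply isOpen_ball.mem_nhds
        simp only [mem_ball, dist_zero_right, hRdef]
        linarith
    · intro b hb
      set k := e ⟨b, hb⟩ with hk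
      have hak : a k = b := by simp [ha_def, hk]
      set R : ℝ := ‖b‖ + 1 with hRdef
      have hkmem : k ∈ (hfinidx (2*R)).toFinset := by
        rw [Set.Finite.mem_toFinset]
        simp only [mem_setOf_eq, hak, hRdef]
        linarith [norm_nonneg b]
      refine ⟨fun z => (∑ i ∈ ((hfinidx (2*R)).toFinset).erase k, d i z)
          + (∑' i : ↑((↑(hfinidx (2*R)).toFinset : Set ℕ)ᶜ), d (↑i) z) - p k z, ?_, ?_⟩
      · apply AnalyticAt.sub
        · apply AnalyticAt.add
          · apply Finset.analyticAt_fun_sum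
            intro i hi
            have hik : i ≠ k := (Finset.mem_erase.mp hi).1
            apply AnalyticAt.sub
            · have hzb : b ∈ ({a i}ᶜ : Set ℂ) := by
                simp only [mem_compl_iff, mem_singleton_iff]
                intro hbe
                exact hik (hainj (by rw [hak, ← hbe]))
              exact (hr _ (haS i)).analyticAt (isOpen_compl_singleton.mem_nhds hzb)
            · exact (hp1 i).analyticAt b
          · apply ((htail R (by positivity)).analyticAt)
            apply isOpen_ball.mem_nhds
            simp only [mem_ball, dist_zero_right, hRdef]
            linarith
        · exact (hp1 k).analyticAt b
      · intro z _
        have h1 := hsplit R z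
        rw [← Finset.add_sum_erase _ (fun i => d i z) hkmem] at h1
        rw [h1, ← hak]
        simp only [hd_def]
        ring

/-- The ring of entire functions has Bass stable rank one: for entire `f, g`
with no common zeros there is an entire `c` such that `f + c * g` has no
zeros. -/
theorem stmt15 (f g : ℂ → ℂ) (hf : Differentiable ℂ f)
    (hg : Differentiable ℂ g) (h : ∀ z, f z ≠ 0 ∨ g z ≠ 0) :
    ∃ c : ℂ → ℂ, Differentiable ℂ c ∧ ∀ z, f z + c z * g z ≠ 0 := by
  classical
  by_cases hgz : ∃ z, g z ≠ 0
  swap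
  · -- g ≡ 0 : then f never vanishes
    push_neg at hgz
    refine ⟨0, differentiable_const 0, fun z => ?_⟩
    have hfz : f z ≠ 0 := (h z).resolve_right (by simp [hgz z])
    simpa [hgz z] using hfz
  -- main case
  set Z : Set ℂ := {z | g z = 0} with hZdef
  have hZmem : ∀ {a : ℂ}, a ∈ Z ↔ g a = 0 := fun {a} => Iff.rfl
  have hfa : ∀ a ∈ Z, f a ≠ 0 := fun a ha => (h a).resolve_right (by simpa using hZmem.mp ha)
  -- local data at each zero of g
  have hloc : ∀ a ∈ Z, ∃ (m : ℕ) (u L T B : ℂ → ℂ),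
      1 ≤ m ∧ AnalyticAt ℂ u a ∧ u a ≠ 0 ∧ (∀ᶠ z in nhds a, g z = (z - a) ^ m * u z) ∧
      AnalyticAt ℂ L a ∧ L a = Complex.log (f a) ∧
      (∀ᶠ z in nhds a, Complex.exp (L z) = f z) ∧
      Differentiable ℂ T ∧ AnalyticAt ℂ B a ∧
      (∀ z, L z / u z = T z + (z - a) ^ m * B z) := by
    intro a ha
    obtain ⟨m, u, hm, hu, hua, hgf⟩ := zero_factor hg hgz (hZmem.mp ha)
    obtain ⟨L, hL, hLa, hLf⟩ := local_log hf (hfa a ha)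
    obtain ⟨T, B, hT, hB, hTB⟩ := taylor_decomp m (hL.div hu hua)
    exact ⟨m, u, L, T, B, hm, hu, hua, hgf, hL, hLa, hLf, hT, hB, hTB⟩
  choose m u L T B hm hu hua hgf hL hLa hLf hT hB hTB using hloc
  -- punctured non-vanishing of g near each zero
  have hpunct : ∀ a (ha : a ∈ Z), ∀ᶠ z in 𝓝[≠] a, g z ≠ 0 := by
    intro a ha
    rw [eventually_nhdsWithin_iff]
    filter_upwards [hgf a ha, (hu a ha).continuousAt.eventually_ne (hua a ha)] with z h1 h2 h3
    rw [h1]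
    exact mul_ne_zero (pow_ne_zero _ (sub_ne_zero.mpr (by simpa using h3))) h2
  -- Z is finite in every closed ball
  have hZclosed : IsClosed Z := isClosed_eq hg.continuous continuous_const
  have hfin : ∀ R : ℝ, (Z ∩ closedBall 0 R).Finite := by
    intro R
    apply IsCompact.finite ((isCompact_closedBall 0 R).inter_left hZclosed)
    rw [isDiscrete_iff_nhdsNE]
    intro a ha
    rw [inf_principal_eq_bot]
    apply mem_of_superset (hpunct a ha.1)
    intro z hz
    simp only [mem_compl_iff, mem_inter_iff, not_and]
    intro hzZ
    exact absurd (hZmem.mp hzZ) hz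
  -- principal parts
  set r : ℂ → ℂ → ℂ := fun a =>
    if ha : a ∈ Z then (fun z => T a ha z / (z - a) ^ (m a ha)) else 0 with hrdef
  have hra : ∀ (a) (ha : a ∈ Z) (z : ℂ), r a z = T a ha z / (z - a) ^ (m a ha) := by
    intro a ha z
    simp only [hrdef, dif_pos ha]
  have hr : ∀ a ∈ Z, DifferentiableOn ℂ (r a) {a}ᶜ := by
    intro a ha
    have : DifferentiableOn ℂ (fun z => T a ha z / (z - a) ^ (m a ha)) {a}ᶜ := by
      apply DifferentiableOn.div ((hT a ha).differentiableOn)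
      · exact (Differentiable.pow (differentiable_id.sub (differentiable_const a)) _).differentiableOn
      · intro z hz
        exact pow_ne_zero _ (sub_ne_zero.mpr (by simpa using hz))
    exact this.congr (fun z _ => hra a ha z)
  obtain ⟨M, hM, hMN⟩ := mittag_leffler Z hfin r hr
  choose N hN hMrN using hMN
  -- the entire function H with exp (H) ≡ f mod g
  set H : ℂ → ℂ := fun z => if g z = 0 then Complex.log (f z) else g z * M z with hHdef
  -- local model for H near a ∈ Z
  have hHloc : ∀ (a) (ha : a ∈ Z), H =ᶠ[nhds a]
      (fun z => u a ha z * T a ha z + g z * N a ha z) := by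
    intro a ha
    have hval : H a = u a ha a * T a ha a + g a * N a ha a := by
      have hTa : T a ha a = L a ha a / u a ha a := by
        have := hTB a ha a
        rw [sub_self] at this
        rw [zero_pow (Nat.one_le_iff_ne_zero.mp (hm a ha))] at this
        simpa using this.symm
      have hga : g a = 0 := hZmem.mp ha
      rw [hHdef]
      simp only [hga, if_pos rfl, zero_mul, add_zero, hTa]
      rw [mul_div_cancel₀ _ (hua a ha)]
      exact (hLa a ha).symm
    have hev : ∀ᶠ z in nhds a, z ≠ a →
        H z = u a ha z * T a ha z + g z * N a ha z := by
      filter_upwards [hgf a ha, (hu a ha).continuousAt.eventually_ne (hua a ha)]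
        with z h1 h2 hza
      have hzma : (z - a) ^ (m a ha) ≠ 0 := pow_ne_zero _ (sub_ne_zero.mpr hza)
      have hgz0 : g z ≠ 0 := by rw [h1]; exact mul_ne_zero hzma h2
      have hHz : H z = g z * M z := by rw [hHdef]; simp only [if_neg hgz0]
      rw [hHz, hMrN a ha z hza, hra a ha z, h1]
      field_simp
    have haev : ∀ᶠ z in nhds a, H z = u a ha z * T a ha z + g z * N a ha z := by
      filter_upwards [hev] with z hz
      by_cases hza : z = a
      · rw [hza]; exact hval
      · exact hz hza
    exact haev
  have hHdiff : Differentiable ℂ H := by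
    intro z₀
    by_cases hz₀ : g z₀ = 0
    · have ha : z₀ ∈ Z := hZmem.mpr hz₀
      have hφ : DifferentiableAt ℂ
          (fun z => u z₀ ha z * T z₀ ha z + g z * N z₀ ha z) z₀ := by
        apply DifferentiableAt.add
        · exact ((hu z₀ ha).differentiableAt).mul ((hT z₀ ha) z₀)
        · exact (hg z₀).mul ((hN z₀ ha).differentiableAt)
      exact hφ.congr_of_eventuallyEq (hHloc z₀ ha)
    · have hev : H =ᶠ[nhds z₀] (fun z => g z * M z) := by
        filter_upwards [hg.continuous.continuousAt.eventually_ne hz₀] with z hz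
        rw [hHdef]; simp only [if_neg hz]
      have : DifferentiableAt ℂ (fun z => g z * M z) z₀ :=
        (hg z₀).mul ((hM z₀ (fun hmem => hz₀ (hZmem.mp hmem))).differentiableAt)
      exact this.congr_of_eventuallyEq hev
  -- order estimate : H - L vanishes to order ≥ m at a
  have hHL : ∀ (a) (ha : a ∈ Z), ∀ᶠ z in nhds a,
      H z - L a ha z = (z - a) ^ (m a ha) * (u a ha z * (N a ha z - B a ha z)) := by
    intro a ha
    filter_upwards [hHloc a ha, hgf a ha,
      (hu a ha).continuousAt.eventually_ne (hua a ha)] with z h1 h2 h3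
    have hLz : L a ha z = u a ha z * (T a ha z + (z - a) ^ (m a ha) * B a ha z) := by
      have := hTB a ha z
      field_simp at this
      linear_combination this
    rw [h1, hLz, h2]
    ring
  -- the correcting function c
  set q : ℂ → ℂ := fun z => (Complex.exp (H z) - f z) / g z with hqdef
  set c : ℂ → ℂ := fun z => if g z = 0 then limUnder (𝓝[≠] z) q else q z with hcdef
  -- local model for q near a ∈ Z
  have hqloc : ∀ (a) (ha : a ∈ Z), ∀ᶠ z in nhds a, z ≠ a → q z =
      Complex.exp (L a ha z) * (u a ha z * (N a ha z - B a ha z)) *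
        Eaux (H z - L a ha z) / u a ha z := by
    intro a ha
    filter_upwards [hHL a ha, hgf a ha, hLf a ha,
      (hu a ha).continuousAt.eventually_ne (hua a ha)] with z h1 h2 h3 h4 hza
    have hzma : (z - a) ^ (m a ha) ≠ 0 := pow_ne_zero _ (sub_ne_zero.mpr hza)
    have hHz : Complex.exp (H z) - f z =
        Complex.exp (L a ha z) * ((H z - L a ha z) * Eaux (H z - L a ha z)) := by
      have h5 : Complex.exp (H z) =
          Complex.exp (L a ha z) * Complex.exp (H z - L a ha z) := by
        rw [← Complex.exp_add]
        congr 1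
        ring
      rw [h5, exp_eq_one_add_mul_Eaux (H z - L a ha z), ← h3]
      ring
    rw [hqdef]
    simp only
    rw [hHz, h1, h2]
    field_simp
  have hcdiff : Differentiable ℂ c := by
    intro a
    by_cases ha0 : g a = 0
    · have ha : a ∈ Z := hZmem.mpr ha0
      set ψ : ℂ → ℂ := fun z => Complex.exp (L a ha z) *
        (u a ha z * (N a ha z - B a ha z)) * Eaux (H z - L a ha z) / u a ha z with hψdef
      have hψdiff : DifferentiableAt ℂ ψ a := by
        apply DifferentiableAt.div _ ((hu a ha).differentiableAt) (hua a ha)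
        apply DifferentiableAt.mul
        · apply DifferentiableAt.mul
          · exact ((hL a ha).differentiableAt).cexp
          · exact ((hu a ha).differentiableAt).mul
              (((hN a ha).differentiableAt).sub ((hB a ha).differentiableAt))
        · have hsub : DifferentiableAt ℂ (fun z => H z - L a ha z) a :=
            (hHdiff a).sub ((hL a ha).differentiableAt)
          have := (Eaux_differentiable (H a - L a ha a)).comp a hsub
          exact this
      have hqψ : ∀ᶠ z in 𝓝[≠] a, q z = ψ z := by
        rw [eventually_nhdsWithin_iff]
        filter_upwards [hqloc a ha] with z hz hza
        exact hz hza
      have hlim : Filter.Tendsto q (𝓝[≠] a) (nhds (ψ a)) := by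
        apply Filter.Tendsto.congr' (Filter.EventuallyEq.symm hqψ)
        exact (hψdiff.continuousAt.tendsto).mono_left nhdsWithin_le_nhds
      have hca : c a = ψ a := by
        rw [hcdef]
        simp only [if_pos ha0]
        exact hlim.limUnder_eq
      have hcev : c =ᶠ[nhds a] ψ := by
        have hev2 : ∀ᶠ z in nhds a, z ≠ a → c z = ψ z := by
          have hgne : ∀ᶠ z in nhds a, z ∈ ({a}ᶜ : Set ℂ) → g z ≠ 0 :=
            eventually_nhdsWithin_iff.mp (hpunct a ha)
          filter_upwards [hqloc a ha, hgne] with z h1 h2 hza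
          rw [hcdef]
          simp only [if_neg (h2 (by simpa using hza))]
          exact h1 hza
        filter_upwards [hev2] with z hz
        by_cases hza : z = a
        · rw [hza]; exact hca
        · exact hz hza
      exact hψdiff.congr_of_eventuallyEq hcev
    · have hev : c =ᶠ[nhds a] q := by
        filter_upwards [hg.continuous.continuousAt.eventually_ne ha0] with z hz
        rw [hcdef]; simp only [if_neg hz]
      have hq : DifferentiableAt ℂ q a :=
        ((hHdiff a).cexp.sub (hf a)).div (hg a) ha0
      exact hq.congr_of_eventuallyEq hev
  refine ⟨c, hcdiff, fun z => ?_⟩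
  by_cases hz : g z = 0
  · rw [hz, mul_zero, add_zero]
    exact hfa z (hZmem.mpr hz)
  · have hcz : c z = q z := by rw [hcdef]; simp only [if_neg hz]
    rw [hcz, hqdef]
    simp only
    rw [div_mul_cancel₀ _ hz]
    have : f z + (Complex.exp (H z) - f z) = Complex.exp (H z) := by ring
    rw [this]
    exact Complex.exp_ne_zero _
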